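/- arXiv:2204.02073 — 3 statements merged into one kernel-verified Lean document; each statement's English description precedes it below -/
import Mathlib

section
/- Knight's identity for the check function: for any reals u₁, u₂ and τ ∈ (0,1), ρ_τ(u₁ - u₂) - ρ_τ(u₁) = u₂ (1{u₁ ≤ 0} - τ) + ∫₀¹ u₂ (1{u₁ ≤ u₂ s} - 1{u₁ ≤ 0}) ds, where ρ_τ(u) = u(τ - 1{u < 0}). -/
open MeasureTheory

lemma ind_int_ge (c : ℝ) : ∫ s in (0:ℝ)..1, (if c ≤ s then (1:ℝ) else 0) = 1 - max 0 (min 1 c) := by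
  have h : ∀ s : ℝ, (if c ≤ s then (1:ℝ) else 0) = (Set.Ici c).indicator (fun _ => (1:ℝ)) s := by
    intro s; simp [Set.indicator_apply]
  simp only [h]
  rw [intervalIntegral.integral_of_le zero_le_one,
    MeasureTheory.setIntegral_indicator measurableSet_Ici, MeasureTheory.setIntegral_const,
    Set.inter_comm]
  rcases le_or_gt c 0 with hc0 | hc0
  · have hset : Set.Ici c ∩ Set.Ioc 0 1 = Set.Ioc (0:ℝ) 1 := by
      apply Set.inter_eq_self_of_subset_right
      intro x hx; exact le_trans hc0 (le_of_lt hx.1)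
    rw [hset, Real.volume_real_Ioc_of_le zero_le_one, max_eq_left (by simp [min_le_iff]; right; exact hc0)]
    norm_num
  · rcases le_or_gt c 1 with hc1 | hc1
    · have hset : Set.Ici c ∩ Set.Ioc 0 1 = Set.Icc c 1 := by
        ext x; simp only [Set.mem_inter_iff, Set.mem_Ici, Set.mem_Ioc, Set.mem_Icc]
        constructor
        · rintro ⟨h1, _, h3⟩; exact ⟨h1, h3⟩
        · rintro ⟨h1, h2⟩; exact ⟨h1, lt_of_lt_of_le hc0 h1, h2⟩
      rw [hset, Real.volume_real_Icc_of_le hc1, min_eq_right hc1, max_eq_right (le_of_lt hc0)]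
      simp
    · have hset : Set.Ici c ∩ Set.Ioc 0 1 = (∅ : Set ℝ) := by
        ext x; simp only [Set.mem_inter_iff, Set.mem_Ici, Set.mem_Ioc, Set.mem_empty_iff_false, iff_false]
        rintro ⟨h1, _, h3⟩; linarith
      rw [hset, min_eq_left (le_of_lt hc1), max_eq_right zero_le_one]
      simp

lemma ind_int_le (c : ℝ) : ∫ s in (0:ℝ)..1, (if s ≤ c then (1:ℝ) else 0) = max 0 (min 1 c) := by
  have h : ∀ s : ℝ, (if s ≤ c then (1:ℝ) else 0)
      = (fun t => if 1 - c ≤ t then (1:ℝ) else 0) (1 - s) := by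
    intro s; simp only
    exact if_congr (by constructor <;> intro <;> linarith) rfl rfl
  simp only [h]
  have := intervalIntegral.integral_comp_sub_left (a := (0:ℝ)) (b := 1)
      (fun t => if 1 - c ≤ t then (1:ℝ) else 0) 1
  rw [show (1:ℝ)-1 = 0 by norm_num, show (1:ℝ)-0 = 1 by norm_num] at this
  rw [this, ind_int_ge]
  simp only [min_def, max_def]
  split_ifs <;> linarith

lemma Jval (u₁ u₂ : ℝ) : ∫ s in (0:ℝ)..1, (if u₁ ≤ u₂ * s then u₂ else 0)
    = (if u₁ < 0 then u₁ else 0) - (if u₁ - u₂ < 0 then u₁ - u₂ else 0) := by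
  rcases lt_trichotomy u₂ 0 with hneg | hz | hpos
  · have h : ∀ s : ℝ, (if u₁ ≤ u₂ * s then u₂ else 0)
        = u₂ * (if s ≤ u₁ / u₂ then (1:ℝ) else 0) := by
      intro s
      have hiff : u₁ ≤ u₂ * s ↔ s ≤ u₁ / u₂ := by
        rw [le_div_iff_of_neg hneg, mul_comm]
      rw [if_congr hiff rfl rfl]
      split_ifs <;> ring
    simp only [h]
    rw [intervalIntegral.integral_const_mul, ind_int_le]
    rcases lt_or_ge 0 u₁ with h1 | h1
    · have hd : u₁ / u₂ < 0 := div_neg_of_pos_of_neg h1 hneg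
      rw [min_eq_right (by linarith), max_eq_left (le_of_lt hd),
        if_neg (show ¬ u₁ < 0 by linarith), if_neg (show ¬ u₁ - u₂ < 0 by linarith)]
      ring
    · rcases lt_or_ge u₂ u₁ with h2 | h2
      · have ha : 0 ≤ u₁ / u₂ := (le_div_iff_of_neg hneg).2 (by linarith)
        have hb : u₁ / u₂ < 1 := by
          rw [div_lt_one_of_neg hneg]; exact h2
        rw [min_eq_right (le_of_lt hb), max_eq_right ha,
          if_neg (show ¬ u₁ - u₂ < 0 by linarith)]
        rcases lt_or_eq_of_le h1 with h3 | h3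
        · rw [if_pos h3, mul_comm, div_mul_cancel₀ _ (ne_of_lt hneg)]; ring
        · rw [if_neg (show ¬ u₁ < 0 by simp [h3]), h3]; simp
      · have ha : 1 ≤ u₁ / u₂ := (one_le_div_of_neg hneg).2 h2
        rw [min_eq_left ha, max_eq_right zero_le_one,
          if_pos (show u₁ < 0 by linarith)]
        rcases lt_or_eq_of_le h2 with h3 | h3
        · rw [if_pos (show u₁ - u₂ < 0 by linarith)]; ring
        · rw [if_neg (show ¬ u₁ - u₂ < 0 by simp [h3]), h3]; ring
  · simp [hz]
  · have h : ∀ s : ℝ, (if u₁ ≤ u₂ * s then u₂ else 0)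
        = u₂ * (if u₁ / u₂ ≤ s then (1:ℝ) else 0) := by
      intro s
      have hiff : u₁ ≤ u₂ * s ↔ u₁ / u₂ ≤ s := by
        rw [div_le_iff₀ hpos, mul_comm]
      rw [if_congr hiff rfl rfl]
      split_ifs <;> ring
    simp only [h]
    rw [intervalIntegral.integral_const_mul, ind_int_ge]
    rcases le_or_gt u₁ 0 with h1 | h1
    · have hd : u₁ / u₂ ≤ 0 := div_nonpos_of_nonpos_of_nonneg h1 (le_of_lt hpos)
      rw [min_eq_right (by linarith), max_eq_left hd,
        if_pos (show u₁ - u₂ < 0 by linarith)]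
      rcases lt_or_eq_of_le h1 with h3 | h3
      · rw [if_pos h3]; ring
      · rw [if_neg (show ¬ u₁ < 0 by simp [h3]), h3]; ring
    · rcases lt_or_ge u₁ u₂ with h2 | h2
      · have ha : 0 ≤ u₁ / u₂ := le_of_lt (div_pos h1 hpos)
        have hb : u₁ / u₂ < 1 := (div_lt_one hpos).2 h2
        rw [min_eq_right (le_of_lt hb), max_eq_right ha,
          if_neg (show ¬ u₁ < 0 by linarith), if_pos (show u₁ - u₂ < 0 by linarith),
          mul_sub, mul_one, mul_comm, div_mul_cancel₀ _ (ne_of_gt hpos)]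
        ring
      · have ha : 1 ≤ u₁ / u₂ := (one_le_div hpos).2 h2
        rw [min_eq_left ha, max_eq_right zero_le_one,
          if_neg (show ¬ u₁ < 0 by linarith), if_neg (show ¬ u₁ - u₂ < 0 by linarith)]
        ring

lemma Jintegrable (u₁ u₂ : ℝ) :
    IntervalIntegrable (fun s => if u₁ ≤ u₂ * s then u₂ else 0) volume 0 1 := by
  have hmeas : MeasurableSet {s : ℝ | u₁ ≤ u₂ * s} :=
    measurableSet_le measurable_const (measurable_id.const_mul u₂)
  have h : (fun s => if u₁ ≤ u₂ * s then u₂ else 0)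
      = Set.indicator {s : ℝ | u₁ ≤ u₂ * s} (fun _ => u₂) := by
    funext s; simp [Set.indicator_apply, Set.mem_setOf_eq]
  rw [h, intervalIntegrable_iff]
  apply (integrable_indicator_iff hmeas).2
  refine integrableOn_const (ne_of_lt ?_) enorm_ne_top
  rw [MeasureTheory.Measure.restrict_apply hmeas]
  refine lt_of_le_of_lt (measure_mono Set.inter_subset_right) ?_
  rw [Set.uIoc]
  exact measure_Ioc_lt_top

noncomputable def check (τ u : ℝ) : ℝ := u * (τ - if u < 0 then 1 else 0)

theorem knight_identity (τ u₁ u₂ : ℝ) (hτ : τ ∈ Set.Ioo (0:ℝ) 1) :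
    check τ (u₁ - u₂) - check τ u₁ =
      u₂ * ((if u₁ ≤ 0 then (1:ℝ) else 0) - τ) +
        ∫ s in (0:ℝ)..1, u₂ * ((if u₁ ≤ u₂ * s then (1:ℝ) else 0) -
          (if u₁ ≤ 0 then (1:ℝ) else 0)) := by
  have hrw : ∀ s : ℝ, u₂ * ((if u₁ ≤ u₂ * s then (1:ℝ) else 0) -
      (if u₁ ≤ 0 then (1:ℝ) else 0))
      = (if u₁ ≤ u₂ * s then u₂ else 0) - u₂ * (if u₁ ≤ 0 then (1:ℝ) else 0) := by
    intro s; split_ifs <;> ring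
  simp only [hrw]
  rw [intervalIntegral.integral_sub (Jintegrable u₁ u₂) intervalIntegrable_const,
    intervalIntegral.integral_const, Jval]
  unfold check
  split_ifs <;> simp <;> ring
end

section
/- Pointwise convergence plus convexity implies convergence of minimizers (deterministic convexity lemma): if g_n : ℝ^d → ℝ are convex functions converging pointwise to a convex function g with a unique minimizer x*, and x_n minimizes g_n, with (x_n) bounded, then x_n → x*. -/
open Filter

/-- Each coordinate of a vector in Euclidean space is bounded by its norm. -/
lemma euclidean_abs_coord_le_norm {d : ℕ} (x : EuclideanSpace ℝ (Fin d)) (i : Fin d) :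
    |x i| ≤ ‖x‖ := by
  have h : Real.sqrt (|x i| ^ 2) ≤ Real.sqrt (∑ j, ‖x j‖ ^ 2) := by
    apply Real.sqrt_le_sqrt
    simpa [Real.norm_eq_abs] using Finset.single_le_sum (f := fun j => |x j| ^ 2)
      (fun j _ => sq_nonneg _) (Finset.mem_univ i)
  simpa [EuclideanSpace.norm_eq, Real.sqrt_sq_eq_abs] using h

theorem convex_minimizers_converge {d : ℕ}
    (g : ℕ → EuclideanSpace ℝ (Fin d) → ℝ) (glim : EuclideanSpace ℝ (Fin d) → ℝ)
    (hconv : ∀ n, ConvexOn ℝ Set.univ (g n))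
    (hlimconv : ConvexOn ℝ Set.univ glim)
    (hpt : ∀ x, Tendsto (fun n => g n x) atTop (nhds (glim x)))
    (xstar : EuclideanSpace ℝ (Fin d))
    (hmin : ∀ x, glim xstar ≤ glim x)
    (huniq : ∀ y, (∀ x, glim y ≤ glim x) → y = xstar)
    (x : ℕ → EuclideanSpace ℝ (Fin d))
    (hxmin : ∀ n, ∀ z, g n (x n) ≤ g n z)
    (hbdd : ∃ R : ℝ, ∀ n, ‖x n‖ ≤ R) :
    Tendsto x atTop (nhds xstar) := by
  obtain ⟨R, hR⟩ := hbdd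
  have hR0 : 0 ≤ R := le_trans (norm_nonneg _) (hR 0)
  set ρ : ℝ := 2 * ‖xstar‖ + R + 2 with hρdef
  have hρpos : 0 < ρ := by positivity
  -- the finite vertex set of the cube [-ρ, ρ]^d
  set V : Set (EuclideanSpace ℝ (Fin d)) :=
    WithLp.toLp 2 '' ((Set.pi Set.univ fun _ : Fin d => ({-ρ, ρ} : Set ℝ) : Set (Fin d → ℝ)))
      with hVdef
  have hVfin : V.Finite := (Set.Finite.pi fun _ => Set.toFinite _).image _
  -- the ball of radius ρ is contained in the convex hull of the vertices
  have hball : ∀ z : EuclideanSpace ℝ (Fin d), ‖z‖ ≤ ρ → z ∈ convexHull ℝ V := by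
    intro z hz
    have hlin : IsLinearMap ℝ (WithLp.toLp 2 : (Fin d → ℝ) → EuclideanSpace ℝ (Fin d)) :=
      (WithLp.linearEquiv 2 ℝ (Fin d → ℝ)).symm.toLinearMap.isLinear
    rw [hVdef, ← IsLinearMap.image_convexHull hlin]
    refine ⟨WithLp.ofLp z, mem_convexHull_pi fun i _ => ?_, rfl⟩
    rw [convexHull_pair, segment_eq_Icc (by linarith : -ρ ≤ ρ)]
    have := (euclidean_abs_coord_le_norm z i).trans hz
    exact abs_le.mp this
  -- an upper bound for glim on the vertices
  obtain ⟨M₀, hM₀⟩ := (hVfin.image glim).bddAbove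
  rw [mem_upperBounds] at hM₀
  -- eventually, g n is at most M₀ + 1 on all vertices
  have hev1 : ∀ᶠ n in atTop, ∀ v ∈ V, g n v ≤ M₀ + 1 := by
    refine (eventually_all_finite hVfin).2 fun v hv => ?_
    filter_upwards [(hpt v).eventually (eventually_le_nhds (lt_add_one (glim v)))] with n hn
    have : glim v ≤ M₀ := hM₀ _ ⟨v, hv, rfl⟩
    linarith
  have hev2 : ∀ᶠ n in atTop, glim xstar - 1 ≤ g n xstar :=
    (hpt xstar).eventually (eventually_ge_nhds (by linarith))
  -- uniform bound M for |g n| on the ball of radius ρ, eventually in n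
  set m : ℝ := 2 * (glim xstar - 1) - (M₀ + 1) with hmdef
  set M : ℝ := max (M₀ + 1) (-m) with hMdef
  have habs : ∀ᶠ n in atTop, ∀ a : EuclideanSpace ℝ (Fin d), dist a 0 < ρ → |g n a| ≤ M := by
    filter_upwards [hev1, hev2] with n h1 h2
    intro a ha
    rw [dist_zero_right] at ha
    -- upper bound
    have hup : ∀ z : EuclideanSpace ℝ (Fin d), ‖z‖ ≤ ρ → g n z ≤ M₀ + 1 := by
      intro z hz
      obtain ⟨v, hv, hle⟩ :=
        (hconv n).exists_ge_of_mem_convexHull (Set.subset_univ V) (hball z hz)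
      exact hle.trans (h1 v hv)
    -- lower bound via the minimizer and convexity
    have hw : ‖(2 : ℝ) • xstar - x n‖ ≤ ρ := by
      calc ‖(2 : ℝ) • xstar - x n‖ ≤ ‖(2 : ℝ) • xstar‖ + ‖x n‖ := norm_sub_le _ _
        _ ≤ 2 * ‖xstar‖ + R := by
            rw [norm_smul]
            simp only [Real.norm_ofNat]
            exact add_le_add le_rfl (hR n)
        _ ≤ ρ := by rw [hρdef]; linarith
    have hcomb : xstar = (1/2 : ℝ) • (x n) + (1/2 : ℝ) • ((2 : ℝ) • xstar - x n) := by
      module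
    have hcvx := (hconv n).2 (Set.mem_univ (x n)) (Set.mem_univ ((2 : ℝ) • xstar - x n))
      (by norm_num : (0:ℝ) ≤ 1/2) (by norm_num : (0:ℝ) ≤ 1/2) (by norm_num)
    rw [← hcomb, smul_eq_mul, smul_eq_mul] at hcvx
    have hlow : m ≤ g n (x n) := by
      have := hup _ hw
      rw [hmdef]
      linarith
    have hlowa : m ≤ g n a := hlow.trans (hxmin n a)
    rw [abs_le]
    constructor
    · rw [hMdef]
      have : -M ≤ m := by
        have : m ≤ -(-m) := by linarith
        have h2' : -m ≤ M := le_max_right _ _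
        linarith
      linarith
    · exact (hup a ha.le).trans (le_max_left _ _)
  -- eventual uniform Lipschitz bound on the smaller ball
  set K : NNReal := (2 * M / 1).toNNReal with hKdef
  have hlip : ∀ᶠ n in atTop, LipschitzOnWith K (g n) (Metric.ball 0 (ρ - 1)) := by
    filter_upwards [habs] with n hn
    exact ((hconv n).subset (Set.subset_univ _) (convex_ball _ _)).lipschitzOnWith_of_abs_le
      one_pos hn
  have hRρ : R < ρ - 1 := by rw [hρdef]; have := norm_nonneg xstar; linarith
  -- the key subsequence argument
  have key : ∀ ψ : ℕ → ℕ, Tendsto ψ atTop atTop →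
      ∀ a : EuclideanSpace ℝ (Fin d), Tendsto (fun k => x (ψ k)) atTop (nhds a) →
      a = xstar := by
    intro ψ hψ a hxa
    have haR : ‖a‖ ≤ R :=
      le_of_tendsto (hxa.norm) (Eventually.of_forall fun k => hR (ψ k))
    have hamem : a ∈ Metric.ball (0 : EuclideanSpace ℝ (Fin d)) (ρ - 1) := by
      rw [Metric.mem_ball, dist_zero_right]; linarith
    have hga : Tendsto (fun k => g (ψ k) a) atTop (nhds (glim a)) := (hpt a).comp hψ
    -- g (ψ k) (x (ψ k)) → glim a
    have hmain : Tendsto (fun k => g (ψ k) (x (ψ k))) atTop (nhds (glim a)) := by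
      have hdiff : Tendsto (fun k => g (ψ k) (x (ψ k)) - glim a) atTop (nhds 0) := by
        apply squeeze_zero_norm'
          (a := fun k => (K : ℝ) * dist (x (ψ k)) a + |g (ψ k) a - glim a|)
        · filter_upwards [hψ.eventually hlip] with k hk
          have hxmem : x (ψ k) ∈ Metric.ball (0 : EuclideanSpace ℝ (Fin d)) (ρ - 1) := by
            rw [Metric.mem_ball, dist_zero_right]
            exact lt_of_le_of_lt (hR (ψ k)) hRρ
          have h1 : dist (g (ψ k) (x (ψ k))) (g (ψ k) a) ≤ (K : ℝ) * dist (x (ψ k)) a :=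
            hk.dist_le_mul _ hxmem _ hamem
          rw [Real.dist_eq] at h1
          calc ‖g (ψ k) (x (ψ k)) - glim a‖
              = |g (ψ k) (x (ψ k)) - g (ψ k) a + (g (ψ k) a - glim a)| := by
                rw [Real.norm_eq_abs]; ring_nf
            _ ≤ |g (ψ k) (x (ψ k)) - g (ψ k) a| + |g (ψ k) a - glim a| := abs_add_le _ _
            _ ≤ (K : ℝ) * dist (x (ψ k)) a + |g (ψ k) a - glim a| := by
                exact add_le_add h1 le_rfl
        · have h1 : Tendsto (fun k => dist (x (ψ k)) a) atTop (nhds 0) := by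
            simpa using hxa.dist (tendsto_const_nhds (x := a))
          have h2 : Tendsto (fun k => |g (ψ k) a - glim a|) atTop (nhds 0) := by
            simpa using (hga.sub (tendsto_const_nhds (x := glim a))).abs
          simpa using ((tendsto_const_nhds (x := (K : ℝ))).mul h1).add h2
      simpa using hdiff.add (tendsto_const_nhds (x := glim a))
    -- a is a global minimizer of glim
    refine huniq a fun z => ?_
    have hgz : Tendsto (fun k => g (ψ k) z) atTop (nhds (glim z)) := (hpt z).comp hψ
    exact le_of_tendsto_of_tendsto' hmain hgz fun k => hxmin (ψ k) z
  -- conclude by the subsequence criterion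
  refine tendsto_of_subseq_tendsto fun ns hns => ?_
  have hmem : ∀ k, x (ns k) ∈ Metric.closedBall (0 : EuclideanSpace ℝ (Fin d)) R := by
    intro k; rw [Metric.mem_closedBall, dist_zero_right]; exact hR (ns k)
  obtain ⟨a, _, φ, hφ, hxa⟩ :=
    (isCompact_closedBall (0 : EuclideanSpace ℝ (Fin d)) R).tendsto_subseq hmem
  have hψ : Tendsto (fun k => ns (φ k)) atTop atTop := hns.comp hφ.tendsto_atTop
  have ha : a = xstar := key (fun k => ns (φ k)) hψ a hxa
  exact ⟨φ, ha ▸ hxa⟩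
end

section
/- Pointwise convergence of convex functions on ℝ^d implies uniform convergence on compact sets: if g_n : ℝ^d → ℝ are convex and g_n(x) → g(x) for every x, then sup_{x ∈ K} |g_n(x) - g(x)| → 0 for every compact K ⊂ ℝ^d. -/
open Filter Metric Set


variable {E : Type*} [NormedAddCommGroup E] [NormedSpace ℝ E] [FiniteDimensional ℝ E]

lemma equiLip (g : ℕ → E → ℝ) (glim : E → ℝ)
    (hconv : ∀ n, ConvexOn ℝ Set.univ (g n))
    (hpt : ∀ x, Tendsto (fun n => g n x) atTop (nhds (glim x))) (x₀ : E) :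
    ∃ r > (0:ℝ), ∃ L : NNReal, ∀ n, LipschitzOnWith L (g n) (ball x₀ r) := by
  have bddA : ∀ x, BddAbove (Set.range fun n => g n x) := fun x => (hpt x).bddAbove_range
  set h : E → ℝ := fun x => ⨆ n, g n x with hh
  have hle : ∀ n x, g n x ≤ h x := fun n x => le_ciSup (bddA x) n
  have hconvh : ConvexOn ℝ Set.univ h := by
    refine ⟨convex_univ, fun x _ y _ a b ha hb hab => ciSup_le fun n => ?_⟩
    refine ((hconv n).2 (mem_univ x) (mem_univ y) ha hb hab).trans ?_
    exact add_le_add (mul_le_mul_of_nonneg_left (hle n x) ha)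
      (mul_le_mul_of_nonneg_left (hle n y) hb)
  have hcont : Continuous h := continuousOn_univ.1 (hconvh.continuousOn isOpen_univ)
  obtain ⟨s, hs, hB⟩ : ∃ s > (0:ℝ), ∀ a, dist a x₀ < s → h a < h x₀ + 1 := by
    obtain ⟨δ, hδ, hδ'⟩ := Metric.continuousAt_iff.1 (hcont.continuousAt (x := x₀)) 1 one_pos
    exact ⟨δ, hδ, fun a ha => by
      have := hδ' ha
      have := abs_lt.1 (by simpa [Real.dist_eq] using this)
      linarith [this.2]⟩
  obtain ⟨c, hc⟩ : ∃ c, ∀ n, c ≤ g n x₀ := by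
    obtain ⟨c, hc⟩ := (hpt x₀).bddBelow_range
    exact ⟨c, fun n => hc ⟨n, rfl⟩⟩
  set B : ℝ := h x₀ + 1
  set M : ℝ := |B| + 2 * |c| with hMdef
  have hM : ∀ n, ∀ a, dist a x₀ < s → |g n a| ≤ M := by
    intro n a ha
    have hub : g n a ≤ B := ((hle n a).trans_lt (hB a ha)).le
    set b : E := x₀ + (x₀ - a) with hbdef
    have hbd : dist b x₀ < s := by
      have : dist b x₀ = dist a x₀ := by
        simp [hbdef, dist_eq_norm, norm_sub_rev]
      rwa [this]
    have hmid : (1/2 : ℝ) • a + (1/2 : ℝ) • b = x₀ := by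
      rw [hbdef]; module
    have hcv := (hconv n).2 (mem_univ a) (mem_univ b) (by norm_num : (0:ℝ) ≤ 1/2)
      (by norm_num : (0:ℝ) ≤ 1/2) (by norm_num)
    rw [hmid] at hcv
    simp only [smul_eq_mul] at hcv
    have hbub : g n b ≤ B := ((hle n b).trans_lt (hB b hbd)).le
    have hlb : 2 * c - B ≤ g n a := by
      have := hc n
      linarith
    rw [abs_le]
    constructor
    · have h1 : -(|B| + 2 * |c|) ≤ 2 * c - B := by
        have := abs_nonneg B; have := neg_abs_le c; have := le_abs_self B
        linarith [neg_abs_le c, le_abs_self B, abs_nonneg B, abs_nonneg c]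
      exact h1.trans hlb
    · exact hub.trans ((le_abs_self B).trans (by simp only [M]; linarith [abs_nonneg c]))
  refine ⟨s/2, by positivity, (2 * M / (s/2)).toNNReal, fun n => ?_⟩
  have := ((hconv n).subset (subset_univ _) (convex_ball x₀ s)).lipschitzOnWith_of_abs_le
    (half_pos hs) (fun a ha => hM n a ha)
  rwa [sub_half] at this


theorem convex_pointwise_to_uniform_on_compacts {d : ℕ}
    (g : ℕ → EuclideanSpace ℝ (Fin d) → ℝ) (glim : EuclideanSpace ℝ (Fin d) → ℝ)
    (hconv : ∀ n, ConvexOn ℝ Set.univ (g n))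
    (hpt : ∀ x, Tendsto (fun n => g n x) atTop (nhds (glim x)))
    (K : Set (EuclideanSpace ℝ (Fin d))) (hK : IsCompact K) :
    TendstoUniformlyOn g glim atTop K := by

  rw [Metric.tendstoUniformlyOn_iff]
  intro ε hε
  -- equi-Lipschitz data at each point
  choose r hr L hL using equiLip g glim hconv hpt
  -- glim inherits the Lipschitz bound
  have hglip : ∀ x₀, ∀ y ∈ ball x₀ (r x₀), ∀ z ∈ ball x₀ (r x₀),
      dist (glim y) (glim z) ≤ (L x₀ : ℝ) * dist y z := by
    intro x₀ y hy z hz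
    refine le_of_tendsto ((hpt y).dist (hpt z)) (Eventually.of_forall fun n => ?_)
    exact (hL x₀ n).dist_le_mul y hy z hz
  set ρ : EuclideanSpace ℝ (Fin d) → ℝ := fun x₀ => min (r x₀) (ε / (3 * ((L x₀ : ℝ) + 1)))
    with hρdef
  have hρpos : ∀ x₀, 0 < ρ x₀ := fun x₀ => lt_min (hr x₀) (by positivity)
  obtain ⟨t, htK, htcov⟩ := hK.elim_nhds_subcover (fun x => ball x (ρ x))
    (fun x _ => ball_mem_nhds x (hρpos x))
  have hev : ∀ᶠ n in atTop, ∀ x₀ ∈ t, dist (g n x₀) (glim x₀) < ε / 3 := by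
    rw [eventually_all_finset]
    intro x₀ _
    exact (Metric.tendsto_nhds.1 (hpt x₀)) (ε / 3) (by positivity)
  filter_upwards [hev] with n hn x hx
  obtain ⟨x₀, hx₀t, hxball⟩ := Set.mem_iUnion₂.1 (htcov hx)
  have hxr : x ∈ ball x₀ (r x₀) :=
    mem_of_mem_of_subset hxball (ball_subset_ball (min_le_left _ _))
  have hx₀r : x₀ ∈ ball x₀ (r x₀) := mem_ball_self (hr x₀)
  have hd : dist x x₀ < ρ x₀ := mem_ball.1 hxball
  have hLρ : (L x₀ : ℝ) * ρ x₀ < ε / 3 := by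
    have h1 : ρ x₀ ≤ ε / (3 * ((L x₀ : ℝ) + 1)) := min_le_right _ _
    have h2 : (L x₀ : ℝ) * ρ x₀ ≤ (L x₀ : ℝ) * (ε / (3 * ((L x₀ : ℝ) + 1))) := by
      exact mul_le_mul_of_nonneg_left h1 (L x₀).coe_nonneg
    have h3 : (L x₀ : ℝ) * (ε / (3 * ((L x₀ : ℝ) + 1))) < ε / 3 := by
      have hc := (L x₀).coe_nonneg
      rw [mul_div_assoc', div_lt_div_iff₀ (by positivity) (by norm_num)]
      nlinarith
    linarith
  have e1 : dist (glim x) (glim x₀) ≤ (L x₀ : ℝ) * dist x x₀ := hglip x₀ x hxr x₀ hx₀r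
  have e2 : dist (g n x₀) (glim x₀) < ε / 3 := hn x₀ hx₀t
  have e3 : dist (g n x₀) (g n x) ≤ (L x₀ : ℝ) * dist x₀ x := (hL x₀ n).dist_le_mul x₀ hx₀r x hxr
  have hLd : (L x₀ : ℝ) * dist x x₀ < ε / 3 :=
    lt_of_le_of_lt (mul_le_mul_of_nonneg_left hd.le (L x₀).coe_nonneg) hLρ
  calc dist (glim x) (g n x) ≤ dist (glim x) (glim x₀) + dist (glim x₀) (g n x₀)
        + dist (g n x₀) (g n x) := dist_triangle4 _ _ _ _
    _ < ε := by
        rw [dist_comm (glim x₀)] at *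
        rw [dist_comm x₀ x] at e3
        linarith
end
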